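/- Elementary symmetric sums of i·tan at equally spaced angles. Let L ≥ 3 be an odd integer and write t(n) = tan(nπ/L). Then for every k ∈ {0,1,…,L}, the sum over all k-element subsets S of {0,1,…,L−1} of the products ∏_{d∈S} i·t(d) equals binom(L,k) if k is even and equals 0 if k is odd (as a complex number). -/

import Mathlib

open Real


/-- Product over powers of a primitive root: `∏ (x - ζ^d c) = x^n - c^n`. -/
lemma aux_prod_sub_pow_mul {n : ℕ} (hn : 0 < n) {ζ : ℂ} (hζ : IsPrimitiveRoot ζ n) (x c : ℂ) :
    ∏ d ∈ Finset.range n, (x - ζ ^ d * c) = x ^ n - c ^ n := by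
  haveI : NeZero n := ⟨hn.ne'⟩
  rw [IsPrimitiveRoot.pow_sub_pow_eq_prod_sub_mul x c hn hζ]
  refine Finset.prod_nbij (fun d => ζ ^ d) ?_ ?_ ?_ ?_
  · intro d hd
    rw [Polynomial.mem_nthRootsFinset hn, ← pow_mul, mul_comm, pow_mul, hζ.pow_eq_one, one_pow]
  · intro a ha b hb hab
    exact hζ.pow_inj (Finset.mem_range.mp (Finset.mem_coe.mp ha))
      (Finset.mem_range.mp (Finset.mem_coe.mp hb)) hab
  · intro μ hμ
    have hμ' : μ ^ n = 1 := (Polynomial.mem_nthRootsFinset hn 1).mp (Finset.mem_coe.mp hμ)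
    obtain ⟨i, hi, hiμ⟩ := hζ.eq_pow_of_pow_eq_one hμ'
    exact ⟨i, Finset.mem_coe.mpr (Finset.mem_range.mpr hi), hiμ⟩
  · intro d hd; rfl

lemma aux_cos_ne_zero (L : ℕ) (hL : 0 < L) (hLodd : Odd L) (d : ℕ) :
    Real.cos ((d : ℝ) * π / L) ≠ 0 := by
  intro h
  obtain ⟨n, hn⟩ := Real.cos_eq_zero_iff.mp h
  have hL0 : (L : ℝ) ≠ 0 := Nat.cast_ne_zero.mpr hL.ne'
  have hπ : (π : ℝ) ≠ 0 := Real.pi_ne_zero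
  have h1 : (2 * (d : ℝ)) * π = ((2 * (n : ℝ) + 1) * L) * π := by
    field_simp at hn
    linear_combination π * hn
  have h2 : (2 * (d : ℝ)) = (2 * (n : ℝ) + 1) * L := mul_right_cancel₀ hπ h1
  have h3 : (2 * (d : ℤ)) = (2 * n + 1) * L := by exact_mod_cast h2
  have h4 : Odd ((2 * n + 1) * (L : ℤ)) :=
    (odd_two_mul_add_one n).mul (by exact_mod_cast hLodd : Odd (L : ℤ))
  exact (Int.not_odd_iff_even.mpr (even_two_mul (d : ℤ))) (h3 ▸ h4)

lemma aux_termwise (L : ℕ) (hL : 0 < L) (hLodd : Odd L) (d : ℕ) (x : ℂ) :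
    (x + Complex.I * ((Real.tan ((d : ℝ) * π / L) : ℝ) : ℂ)) *
        (1 + Complex.exp (2 * π * Complex.I / L) ^ d)
      = (x - 1) - Complex.exp (2 * π * Complex.I / L) ^ d * (-(x + 1)) := by
  set θ : ℝ := (d : ℝ) * π / L with hθ
  have hcos : Real.cos θ ≠ 0 := aux_cos_ne_zero L hL hLodd d
  have hcosC : Complex.cos θ ≠ 0 := by
    rw [← Complex.ofReal_cos]
    exact_mod_cast hcos
  have htan : ((Real.tan θ : ℝ) : ℂ) = Complex.sin θ / Complex.cos θ := by
    rw [Complex.ofReal_tan, Complex.tan_eq_sin_div_cos]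
  have hL0 : (L : ℂ) ≠ 0 := Nat.cast_ne_zero.mpr hL.ne'
  have hζd : Complex.exp (2 * π * Complex.I / L) ^ d
      = (Complex.cos θ + Complex.sin θ * Complex.I) ^ 2 := by
    rw [← Complex.exp_mul_I, ← Complex.exp_nat_mul, ← Complex.exp_nat_mul]
    congr 1
    have : ((θ : ℝ) : ℂ) = (d : ℂ) * (π : ℂ) / (L : ℂ) := by
      rw [hθ]; push_cast; ring
    rw [this]
    field_simp
    ring
  rw [htan, hζd]
  have hpyth : Complex.sin θ ^ 2 + Complex.cos θ ^ 2 = 1 := Complex.sin_sq_add_cos_sq _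
  field_simp
  linear_combination (-(Complex.I * Complex.sin θ + Complex.cos θ)) * hpyth
    + (Complex.cos θ * Complex.sin θ ^ 2 + Complex.I * Complex.sin θ ^ 3) * Complex.I_sq

lemma aux_eval_prod (L : ℕ) (hL : 0 < L) (hLodd : Odd L) (x : ℂ) :
    ∏ d ∈ Finset.range L, (x + Complex.I * ((Real.tan ((d : ℝ) * π / L) : ℝ) : ℂ))
      = ((x + 1) ^ L + (x - 1) ^ L) / 2 := by
  set ζ : ℂ := Complex.exp (2 * π * Complex.I / L) with hζdef
  have hζ : IsPrimitiveRoot ζ L := Complex.isPrimitiveRoot_exp L hL.ne'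
  have h2 : ∏ d ∈ Finset.range L, (1 + ζ ^ d) = 2 := by
    calc ∏ d ∈ Finset.range L, (1 + ζ ^ d)
        = ∏ d ∈ Finset.range L, ((1 : ℂ) - ζ ^ d * (-1)) := by
          refine Finset.prod_congr rfl fun d _ => by ring
      _ = 1 ^ L - (-1) ^ L := aux_prod_sub_pow_mul hL hζ 1 (-1)
      _ = 2 := by rw [hLodd.neg_one_pow]; norm_num
  have h3 : ∏ d ∈ Finset.range L, ((x - 1) - ζ ^ d * (-(x + 1)))
      = (x - 1) ^ L + (x + 1) ^ L := by
    rw [aux_prod_sub_pow_mul hL hζ (x - 1) (-(x + 1)), hLodd.neg_pow]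
    ring
  have h4 : (∏ d ∈ Finset.range L,
        (x + Complex.I * ((Real.tan ((d : ℝ) * π / L) : ℝ) : ℂ))) * 2
      = (x - 1) ^ L + (x + 1) ^ L := by
    rw [← h2, ← Finset.prod_mul_distrib, ← h3]
    exact Finset.prod_congr rfl fun d _ => aux_termwise L hL hLodd d x
  have h2ne : (2 : ℂ) ≠ 0 := two_ne_zero
  rw [eq_div_iff h2ne]
  linear_combination h4


/-- Elementary symmetric sums of `i·tan` at equally spaced angles: for odd
`L ≥ 3` and `k ∈ {0,…,L}`, the sum over all `k`-element subsets `S` of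
`{0,…,L−1}` of `∏_{d∈S} i·tan(dπ/L)` equals `binom(L,k)` if `k` is even
and `0` if `k` is odd. -/
theorem elementary_symmetric_sums_of_i_tan
    (L : ℕ) (hL : 3 ≤ L) (hLodd : Odd L) (k : ℕ) (hk : k ≤ L) :
    ∑ S ∈ Finset.powersetCard k (Finset.range L),
        ∏ d ∈ S, (Complex.I * ((Real.tan ((d : ℝ) * π / L) : ℝ) : ℂ))
      = if Even k then ((L.choose k : ℕ) : ℂ) else 0 := by
  have hL0 : 0 < L := by omega
  set r : ℕ → ℂ := fun d => Complex.I * ((Real.tan ((d : ℝ) * π / L) : ℝ) : ℂ) with hr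
  set p : Polynomial ℂ := ∏ d ∈ Finset.range L, (Polynomial.X + Polynomial.C (r d)) with hp
  set q : Polynomial ℂ :=
    Polynomial.C (2⁻¹ : ℂ) *
      ((Polynomial.X + 1) ^ L + (Polynomial.X - 1) ^ L) with hq
  have hpq : p = q := by
    apply Polynomial.funext
    intro x
    rw [hp, hq]
    simp only [Polynomial.eval_prod, Polynomial.eval_add, Polynomial.eval_sub,
      Polynomial.eval_mul, Polynomial.eval_pow, Polynomial.eval_X, Polynomial.eval_C,
      Polynomial.eval_one]
    rw [aux_eval_prod L hL0 hLodd x]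
    ring
  have hcard : (Finset.range L).card = L := Finset.card_range L
  have hcoeffp : p.coeff (L - k) =
      ∑ S ∈ Finset.powersetCard k (Finset.range L), ∏ d ∈ S, r d := by
    rw [hp]
    rw [Finset.prod_X_add_C_coeff (Finset.range L) r (by rw [hcard]; omega)]
    rw [hcard, Nat.sub_sub_self hk]
  have hcoeffq : q.coeff (L - k)
      = (2⁻¹ : ℂ) * ((L.choose k : ℂ) + (-1) ^ k * (L.choose k : ℂ)) := by
    rw [hq, Polynomial.coeff_C_mul]
    congr 1
    rw [Polynomial.coeff_add]
    have e1 : ((Polynomial.X + 1 : Polynomial ℂ) ^ L).coeff (L - k) = (L.choose (L - k) : ℂ) :=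
      Polynomial.coeff_X_add_one_pow ℂ L (L - k)
    have e2 : ((Polynomial.X - 1 : Polynomial ℂ) ^ L).coeff (L - k)
        = (-1) ^ (L - (L - k)) * (L.choose (L - k) : ℂ) := by
      have : (Polynomial.X - 1 : Polynomial ℂ) = Polynomial.X + Polynomial.C (-1) := by
        simp [sub_eq_add_neg]
      rw [this, Polynomial.coeff_X_add_C_pow]
    rw [e1, e2, Nat.sub_sub_self hk, Nat.choose_symm hk]
  rw [← hcoeffp, hpq, hcoeffq]
  rcases Nat.even_or_odd k with he | ho
  · rw [if_pos he, he.neg_one_pow]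
    ring
  · rw [if_neg (Nat.not_even_iff_odd.mpr ho), ho.neg_one_pow]
    ring
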